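/- Let n ≥ 1 and 1 ≤ k ≤ n be integers and let d_1, …, d_k be positive integers with d_1 + … + d_k < n + 1. Set a_j = (Σ_{i=1}^k d_i + (n−k+1)d_j − (n+1)) / ((n−k+1)d_j), and for 1 ≤ m ≤ k set r_m := ((n+1) − Σ_{j=1}^m d_j − Σ_{j=m+1}^k a_j d_j) / d_m. Then 0 < r_m ≤ n − m + 1 for every 1 ≤ m ≤ k. -/

import Mathlib

open Finset

/-- For `n ≥ 1`, `1 ≤ k ≤ n` and positive integers `d 0, …, d (k-1)` with
`∑ d j < n + 1`, setting
`a j = (∑ i, d i + (n-k+1) * d j - (n+1)) / ((n-k+1) * d j)` and, for `m < k`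
(0-based, corresponding to step `m+1`),
`r m = ((n+1) - ∑_{j ≤ m} d j - ∑_{m < j < k} a j * d j) / d m`,
one has `0 < r m ≤ n - m` for every `m < k`
(in 1-based indexing, `0 < r m ≤ n - m + 1`). -/
theorem cone_index_bounds
    (n k : ℕ) (hn : 1 ≤ n) (hk1 : 1 ≤ k) (hkn : k ≤ n)
    (d : ℕ → ℕ) (hd : ∀ j < k, 0 < d j)
    (hsum : ∑ j ∈ range k, d j < n + 1)
    (a : ℕ → ℚ)
    (ha : ∀ j < k, a j =
      ((∑ i ∈ range k, (d i : ℚ)) + ((n : ℚ) - k + 1) * d j - ((n : ℚ) + 1)) /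
        (((n : ℚ) - k + 1) * d j))
    (r : ℕ → ℚ)
    (hr : ∀ m < k, r m =
      (((n : ℚ) + 1) - (∑ j ∈ range (m + 1), (d j : ℚ)) -
        (∑ j ∈ Ico (m + 1) k, a j * d j)) / d m) :
    ∀ m < k, 0 < r m ∧ r m ≤ (n : ℚ) - m := by
  intro m hm
  have hkq : (k : ℚ) ≤ n := by exact_mod_cast hkn
  have hc : (0 : ℚ) < (n : ℚ) - k + 1 := by linarith
  have hdm : (0 : ℚ) < (d m : ℚ) := by exact_mod_cast hd m hm
  have hdm1 : (1 : ℚ) ≤ (d m : ℚ) := by exact_mod_cast hd m hm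
  set D : ℚ := ∑ i ∈ range k, (d i : ℚ) with hDdef
  have hDcast : D = ((∑ j ∈ range k, d j : ℕ) : ℚ) := by push_cast [hDdef]; ring
  have hDlt : D < (n : ℚ) + 1 := by rw [hDcast]; exact_mod_cast hsum
  -- D ≥ k - 1 + d m
  have hDge_nat : k - 1 + d m ≤ ∑ j ∈ range k, d j := by
    have herase : ∑ j ∈ range k, d j
        = d m + ∑ j ∈ (range k).erase m, d j :=
      (Finset.add_sum_erase _ _ (mem_range.mpr hm)).symm
    have hcard : ((range k).erase m).card = k - 1 := by
      rw [Finset.card_erase_of_mem (mem_range.mpr hm), card_range]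
    have hle : ((range k).erase m).card • 1 ≤ ∑ j ∈ (range k).erase m, d j := by
      apply Finset.card_nsmul_le_sum
      intro x hx
      exact hd x (mem_range.mp (Finset.mem_of_mem_erase hx))
    simp only [smul_eq_mul, mul_one, hcard] at hle
    omega
  have hDge : (k : ℚ) - 1 + (d m : ℚ) ≤ D := by
    rw [hDcast]
    have : ((k - 1 + d m : ℕ) : ℚ) ≤ ((∑ j ∈ range k, d j : ℕ) : ℚ) := by
      exact_mod_cast hDge_nat
    push_cast [Nat.cast_sub hk1] at this
    linarith
  -- each term of the tail sum
  have h1 : ∀ j ∈ Ico (m + 1) k, a j * d j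
      = (d j : ℚ) + (D - ((n : ℚ) + 1)) / ((n : ℚ) - k + 1) := by
    intro j hj
    obtain ⟨hj1, hj2⟩ := Finset.mem_Ico.mp hj
    have hdj : (0 : ℚ) < (d j : ℚ) := by exact_mod_cast hd j hj2
    rw [ha j hj2]
    field_simp
    ring
  have hm1k : m + 1 ≤ k := hm
  have hstep : ∑ j ∈ Ico (m + 1) k, a j * d j
      = (∑ j ∈ Ico (m + 1) k, (d j : ℚ))
        + ((k : ℚ) - m - 1) * ((D - ((n : ℚ) + 1)) / ((n : ℚ) - k + 1)) := by
    rw [Finset.sum_congr rfl h1, Finset.sum_add_distrib, Finset.sum_const,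
      Nat.card_Ico, nsmul_eq_mul]
    congr 1
    congr 1
    push_cast [Nat.cast_sub hm1k]
    ring
  have hsplit : (∑ j ∈ range (m + 1), (d j : ℚ))
      + (∑ j ∈ Ico (m + 1) k, (d j : ℚ)) = D :=
    Finset.sum_range_add_sum_Ico _ hm1k
  have hS2 : (∑ j ∈ Ico (m + 1) k, (d j : ℚ))
      = D - (∑ j ∈ range (m + 1), (d j : ℚ)) := by linarith
  have hr' : r m = (((n : ℚ) + 1 - D) * ((n : ℚ) - m)) / ((((n : ℚ) - k + 1)) * d m) := by
    rw [hr m hm, hstep, hS2]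
    field_simp
    ring
  have hmq : (m : ℚ) < n := by
    have : (m : ℚ) < k := by exact_mod_cast hm
    linarith
  constructor
  · rw [hr']
    apply div_pos
    · apply mul_pos <;> linarith
    · exact mul_pos hc hdm
  · rw [hr', div_le_iff₀ (mul_pos hc hdm)]
    have key : (n : ℚ) + 1 - D ≤ ((n : ℚ) - k + 1) * d m := by nlinarith
    nlinarith
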